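/- Let N ≥ 1, K ≥ 0, let D_0,…,D_K be N×N real symmetric matrices and E_0,…,E_{K−1} be N×N real matrices, and let T be the (K+1)N×(K+1)N symmetric block tridiagonal matrix with diagonal blocks T_{k,k} = D_k, subdiagonal blocks T_{k+1,k} = E_k, superdiagonal blocks T_{k,k+1} = E_kᵀ, and all other blocks zero. If T is positive definite, then the matrices defined recursively by Q_0 = D_0 and Q_{k+1} = D_{k+1} − E_kQ_k^{−1}E_kᵀ are all symmetric positive definite (in particular invertible, so the recursion is well-defined) for k = 0,…,K. -/

import Mathlib

open Matrix Finset

/-- The Schur-complement recursion `Q₀ = D₀`, `Q_{k+1} = D_{k+1} − E_k Q_k⁻¹ E_kᵀ`. -/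
noncomputable def Qrec {N : ℕ} (D E : ℕ → Matrix (Fin N) (Fin N) ℝ) :
    ℕ → Matrix (Fin N) (Fin N) ℝ
  | 0 => D 0
  | k + 1 => D (k + 1) - E k * (Qrec D E k)⁻¹ * (E k)ᵀ

/-- The `(K+1)N × (K+1)N` block tridiagonal matrix with diagonal blocks `D_k`,
subdiagonal blocks `E_k` and superdiagonal blocks `E_kᵀ`. -/
noncomputable def blockTridiag (K N : ℕ) (D E : ℕ → Matrix (Fin N) (Fin N) ℝ) :
    Matrix (Fin (K + 1) × Fin N) (Fin (K + 1) × Fin N) ℝ :=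
  fun p q =>
    if (p.1 : ℕ) = (q.1 : ℕ) then D (p.1 : ℕ) p.2 q.2
    else if (p.1 : ℕ) = (q.1 : ℕ) + 1 then E (q.1 : ℕ) p.2 q.2
    else if (q.1 : ℕ) = (p.1 : ℕ) + 1 then (E (p.1 : ℕ))ᵀ p.2 q.2
    else 0

/-- Scalar block summand of the quadratic form. -/
noncomputable def Fblk {N : ℕ} (D E : ℕ → Matrix (Fin N) (Fin N) ℝ)
    (g : ℕ → Fin N → ℝ) (i j : ℕ) : ℝ :=
  if i = j then g i ⬝ᵥ (D i *ᵥ g i)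
  else if i = j + 1 then g i ⬝ᵥ (E j *ᵥ g j)
  else if j = i + 1 then g i ⬝ᵥ ((E i)ᵀ *ᵥ g j)
  else 0

lemma Fblk_far {N : ℕ} (D E : ℕ → Matrix (Fin N) (Fin N) ℝ)
    (g : ℕ → Fin N → ℝ) {i j : ℕ} (h1 : i ≠ j) (h2 : i ≠ j + 1) (h3 : j ≠ i + 1) :
    Fblk D E g i j = 0 := by
  simp [Fblk, h1, h2, h3]

lemma Fblk_zero_left {N : ℕ} (D E : ℕ → Matrix (Fin N) (Fin N) ℝ)
    (g : ℕ → Fin N → ℝ) {i : ℕ} (h : g i = 0) (j : ℕ) :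
    Fblk D E g i j = 0 := by
  unfold Fblk; split_ifs <;> simp [h]

lemma Fblk_zero_right {N : ℕ} (D E : ℕ → Matrix (Fin N) (Fin N) ℝ)
    (g : ℕ → Fin N → ℝ) {j : ℕ} (h : g j = 0) (i : ℕ) :
    Fblk D E g i j = 0 := by
  unfold Fblk; split_ifs with h1 h2 h3 <;> simp [h1, h]

/-- The quadratic form of the block tridiagonal matrix as a double block sum. -/
lemma quadform_eq_blocks (K N : ℕ) (D E : ℕ → Matrix (Fin N) (Fin N) ℝ)
    (g : ℕ → Fin N → ℝ) :
    (fun p : Fin (K + 1) × Fin N => g (p.1 : ℕ) p.2) ⬝ᵥ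
      (blockTridiag K N D E *ᵥ fun p : Fin (K + 1) × Fin N => g (p.1 : ℕ) p.2) =
    ∑ a ∈ range (K + 1), ∑ b ∈ range (K + 1), Fblk D E g a b := by
  rw [← Fin.sum_univ_eq_sum_range (fun a => ∑ b ∈ range (K + 1), Fblk D E g a b)]
  conv_lhs => rw [dotProduct]
  rw [Fintype.sum_prod_type]
  refine Finset.sum_congr rfl fun a _ => ?_
  rw [← Fin.sum_univ_eq_sum_range (fun b => Fblk D E g (a : ℕ) b)]
  have h : ∀ i : Fin N,
      g (a:ℕ) i * (blockTridiag K N D E *ᵥ fun p : Fin (K + 1) × Fin N => g (p.1 : ℕ) p.2) (a, i)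
      = ∑ b : Fin (K+1), ∑ j : Fin N, g (a:ℕ) i * (blockTridiag K N D E (a,i) (b,j) * g (b:ℕ) j) := by
    intro i
    rw [mulVec, dotProduct, Fintype.sum_prod_type, Finset.mul_sum]
    refine Finset.sum_congr rfl fun b _ => ?_
    rw [Finset.mul_sum]
  simp only [h]
  rw [Finset.sum_comm]
  refine Finset.sum_congr rfl fun b _ => ?_
  unfold blockTridiag Fblk
  by_cases h1 : (a : ℕ) = (b : ℕ)
  · simp only [h1, if_pos rfl]
    simp [dotProduct, mulVec, Finset.mul_sum, h1, mul_assoc]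
  · rw [if_neg h1]
    simp only [if_neg h1]
    by_cases h2 : (a : ℕ) = (b : ℕ) + 1
    · simp only [h2, if_pos rfl]
      simp [dotProduct, mulVec, Finset.mul_sum, mul_assoc]
    · rw [if_neg h2]
      simp only [if_neg h2]
      by_cases h3 : (b : ℕ) = (a : ℕ) + 1
      · simp only [h3, if_pos rfl]
        simp [dotProduct, mulVec, Finset.mul_sum, mul_assoc]
      · rw [if_neg h3]
        simp only [if_neg h3]
        simp

/-- Truncation of the double sum when `g` vanishes above `m`. -/
lemma blocks_truncate (K N : ℕ) (D E : ℕ → Matrix (Fin N) (Fin N) ℝ)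
    (g : ℕ → Fin N → ℝ) (m : ℕ) (hm : m ≤ K) (hg : ∀ j, m < j → g j = 0) :
    ∑ a ∈ range (K + 1), ∑ b ∈ range (K + 1), Fblk D E g a b =
    ∑ a ∈ range (m + 1), ∑ b ∈ range (m + 1), Fblk D E g a b := by
  rw [← Finset.sum_subset (Finset.range_subset_range.2 (by omega) :
        range (m+1) ⊆ range (K+1))]
  · refine Finset.sum_congr rfl fun a _ => ?_
    rw [← Finset.sum_subset (Finset.range_subset_range.2 (by omega) :
        range (m+1) ⊆ range (K+1))]
    intro b _ hb
    exact Fblk_zero_right D E g (hg b (by simpa using hb)) a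
  · intro a _ ha
    refine Finset.sum_eq_zero fun b _ => ?_
    exact Fblk_zero_left D E g (hg a (by simpa using ha)) b

/-- Symmetry of the `Qrec` matrices. -/
lemma Qrec_symm {N : ℕ} (D E : ℕ → Matrix (Fin N) (Fin N) ℝ)
    (k : ℕ) (hD : ∀ j ≤ k, (D j)ᵀ = D j) : (Qrec D E k)ᵀ = Qrec D E k := by
  induction k with
  | zero => exact hD 0 le_rfl
  | succ k ih =>
    have hk := ih (fun j hj => hD j (by omega))
    show (D (k+1) - E k * (Qrec D E k)⁻¹ * (E k)ᵀ)ᵀ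
        = D (k+1) - E k * (Qrec D E k)⁻¹ * (E k)ᵀ
    rw [transpose_sub, hD (k+1) le_rfl, transpose_mul, transpose_mul,
      transpose_transpose, transpose_nonsing_inv, hk, ← Matrix.mul_assoc]

/-- The key telescoping identity. -/
lemma blocks_telescope {N : ℕ} (D E : ℕ → Matrix (Fin N) (Fin N) ℝ)
    (g : ℕ → Fin N → ℝ) (m : ℕ)
    (hQ : ∀ j < m, (Qrec D E j).PosDef)
    (hQs : ∀ j < m, (Qrec D E j)ᵀ = Qrec D E j)
    (hrec : ∀ j < m, g j = -(((Qrec D E j)⁻¹ * (E j)ᵀ) *ᵥ g (j + 1))) :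
    ∑ a ∈ range (m + 1), ∑ b ∈ range (m + 1), Fblk D E g a b =
    g m ⬝ᵥ (Qrec D E m *ᵥ g m) := by
  induction m with
  | zero => simp [Fblk, Qrec]
  | succ m ih =>
    have IH := ih (fun j hj => hQ j (by omega)) (fun j hj => hQs j (by omega))
      (fun j hj => hrec j (by omega))
    have hfar : ∀ i j : ℕ, i + 2 ≤ j ∨ j + 2 ≤ i → Fblk D E g i j = 0 := by
      intro i j hij
      exact Fblk_far D E g (by omega) (by omega) (by omega)
    have split : ∑ a ∈ range (m + 2), ∑ b ∈ range (m + 2), Fblk D E g a b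
        = (∑ a ∈ range (m + 1), ∑ b ∈ range (m + 1), Fblk D E g a b)
          + Fblk D E g m (m+1) + Fblk D E g (m+1) m + Fblk D E g (m+1) (m+1) := by
      rw [Finset.sum_range_succ]
      have h1 : ∑ b ∈ range (m + 2), Fblk D E g (m+1) b
          = Fblk D E g (m+1) m + Fblk D E g (m+1) (m+1) := by
        rw [Finset.sum_range_succ, Finset.sum_range_succ,
          Finset.sum_eq_zero (fun b hb => hfar _ _ (Or.inr (by
            simp only [Finset.mem_range] at hb; omega)))]
        ring
      have h2 : ∀ a ∈ range (m+1), ∑ b ∈ range (m + 2), Fblk D E g a b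
          = ∑ b ∈ range (m + 1), Fblk D E g a b
            + (if a = m then Fblk D E g m (m+1) else 0) := by
        intro a ha
        simp only [Finset.mem_range] at ha
        rw [Finset.sum_range_succ]
        by_cases hcase : a = m
        · subst hcase; simp
        · rw [hfar a (m+1) (Or.inl (by omega)), if_neg hcase]
      rw [Finset.sum_congr rfl h2, Finset.sum_add_distrib, Finset.sum_ite_eq'
        (range (m+1)) m (fun _ => Fblk D E g m (m+1)), if_pos (by simp), h1]
      ring
    rw [split, IH]
    have hQm := hQ m (by omega)
    have hQsm := hQs m (by omega)
    set Q := Qrec D E m with hQdef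
    set u := g (m + 1) with hu
    have hgm : g m = -((Q⁻¹ * (E m)ᵀ) *ᵥ u) := hrec m (by omega)
    have hdet : IsUnit Q.det := hQm.det_pos.ne'.isUnit
    have hQinv : (Q⁻¹)ᵀ = Q⁻¹ := by rw [transpose_nonsing_inv, hQsm]
    have hQQ : Q * Q⁻¹ = 1 := Matrix.mul_nonsing_inv Q hdet
    have dot_shift : ∀ (A : Matrix (Fin N) (Fin N) ℝ) (v x : Fin N → ℝ),
        (A *ᵥ v) ⬝ᵥ x = v ⬝ᵥ (Aᵀ *ᵥ x) := by
      intro A v x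
      rw [← vecMul_transpose, ← dotProduct_mulVec]
    have hAt : (Q⁻¹ * (E m)ᵀ)ᵀ = E m * Q⁻¹ := by
      rw [transpose_mul, transpose_transpose, hQinv]
    have t1 : g m ⬝ᵥ (Q *ᵥ g m) = u ⬝ᵥ ((E m * Q⁻¹ * (E m)ᵀ) *ᵥ u) := by
      rw [hgm, Matrix.mulVec_neg, neg_dotProduct, dotProduct_neg, neg_neg,
        dot_shift, mulVec_mulVec, mulVec_mulVec, hAt]
      have : (E m * Q⁻¹) * Q * (Q⁻¹ * (E m)ᵀ) = E m * Q⁻¹ * (E m)ᵀ := by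
        rw [Matrix.mul_assoc (E m) Q⁻¹ Q, Matrix.nonsing_inv_mul Q hdet, Matrix.mul_one,
          ← Matrix.mul_assoc]
      rw [this]
    have t2 : g m ⬝ᵥ ((E m)ᵀ *ᵥ u) = -(u ⬝ᵥ ((E m * Q⁻¹ * (E m)ᵀ) *ᵥ u)) := by
      rw [hgm, neg_dotProduct, dot_shift, mulVec_mulVec, hAt, Matrix.mul_assoc]
    have t3 : u ⬝ᵥ (E m *ᵥ g m) = -(u ⬝ᵥ ((E m * Q⁻¹ * (E m)ᵀ) *ᵥ u)) := by
      rw [hgm, Matrix.mulVec_neg, dotProduct_neg, mulVec_mulVec, ← Matrix.mul_assoc]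
    have e1 : Fblk D E g m (m+1) = g m ⬝ᵥ ((E m)ᵀ *ᵥ u) := by
      unfold Fblk
      rw [if_neg (by omega), if_neg (by omega), if_pos rfl]
    have e2 : Fblk D E g (m+1) m = u ⬝ᵥ (E m *ᵥ g m) := by
      unfold Fblk
      rw [if_neg (by omega), if_pos rfl]
    have e3 : Fblk D E g (m+1) (m+1) = u ⬝ᵥ (D (m+1) *ᵥ u) := by
      unfold Fblk
      rw [if_pos rfl]
    have hQ1 : Qrec D E (m+1) = D (m+1) - E m * Q⁻¹ * (E m)ᵀ := rfl
    rw [e1, e2, e3, t1, t2, t3, hQ1, Matrix.sub_mulVec, dotProduct_sub]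
    ring

/-- if the symmetric block tridiagonal matrix with diagonal blocks `D_k`
and off-diagonal blocks `E_k`, `E_kᵀ` is positive definite, then all the Schur
complements `Q_k` produced by the recursion `Q₀ = D₀`, `Q_{k+1} = D_{k+1} − E_k Q_k⁻¹ E_kᵀ`
are symmetric positive definite (in particular invertible). -/
theorem block_tridiagonal_posdef_schur (N K : ℕ) (hN : 1 ≤ N)
    (D E : ℕ → Matrix (Fin N) (Fin N) ℝ) (hDsym : ∀ k ≤ K, (D k)ᵀ = D k)
    (hT : (blockTridiag K N D E).PosDef) :
    ∀ k ≤ K, (Qrec D E k).PosDef := by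
  intro k
  induction k using Nat.strong_induction_on with
  | _ k IH =>
  intro hk
  have hQlt : ∀ j < k, (Qrec D E j).PosDef := fun j hj => IH j hj (by omega)
  have hQs : ∀ j ≤ k, (Qrec D E j)ᵀ = Qrec D E j := fun j hj =>
    Qrec_symm D E j (fun i hi => hDsym i (by omega))
  refine posDef_iff_dotProduct_mulVec.mpr ⟨?_, ?_⟩
  · rw [Matrix.IsHermitian, conjTranspose_eq_transpose_of_trivial, hQs k le_rfl]
  · intro y hy
    -- the minimizing block vector
    let w : ℕ → Fin N → ℝ := fun i => Nat.rec y
      (fun i wi => -(((Qrec D E (k - (i+1)))⁻¹ * (E (k - (i+1)))ᵀ) *ᵥ wi)) i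
    have hwsucc : ∀ i, w (i+1)
        = -(((Qrec D E (k - (i+1)))⁻¹ * (E (k - (i+1)))ᵀ) *ᵥ w i) := fun i => rfl
    set g : ℕ → Fin N → ℝ := fun j => if j ≤ k then w (k - j) else 0 with hgdef
    have hgk : g k = y := by
      simp only [hgdef, if_pos le_rfl, Nat.sub_self]
      rfl
    have hgzero : ∀ j, k < j → g j = 0 := by
      intro j hj
      simp only [hgdef, if_neg (by omega : ¬ j ≤ k)]
    have hgrec : ∀ j < k, g j = -(((Qrec D E j)⁻¹ * (E j)ᵀ) *ᵥ g (j+1)) := by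
      intro j hj
      have h1 : g j = w (k - j) := if_pos (by omega)
      have h2 : g (j+1) = w (k - (j+1)) := if_pos (by omega)
      have h3 : k - j = (k - (j+1)) + 1 := by omega
      rw [h1, h2, h3, hwsucc]
      have h4 : k - (k - (j+1) + 1) = j := by omega
      rw [h4]
    have hx : (fun p : Fin (K + 1) × Fin N => g (p.1 : ℕ) p.2) ≠ 0 := by
      obtain ⟨i, hi⟩ : ∃ i, y i ≠ 0 := by
        by_contra hcon; push_neg at hcon; exact hy (funext hcon)
      intro h0
      apply hi
      have := congrFun h0 (⟨k, by omega⟩, i)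
      simpa [hgk] using this
    have hpos := hT.dotProduct_mulVec_pos hx
    rw [star_trivial, quadform_eq_blocks K N D E g,
      blocks_truncate K N D E g k hk hgzero,
      blocks_telescope D E g k hQlt (fun j hj => hQs j (le_of_lt hj)) hgrec,
      hgk] at hpos
    rw [star_trivial]
    exact hpos
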